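/- arXiv:1810.02144 — 2 statements merged into one kernel-verified Lean document; each statement's English description precedes it below -/
import Mathlib

section
/- If the induced non-autonomous system on the space of Borel probability measures M(X) is topologically transitive, then the base non-autonomous system (X, f_{1,∞}) is topologically transitive. -/
open Set Filter MeasureTheory TopologicalSpace Topology

/-- `iterN f n = f_{n-1} ∘ ⋯ ∘ f_0`, the `n`-th iterate of the non-autonomous system. -/
def iterN {X : Type*} (f : ℕ → X → X) : ℕ → X → X
  | 0 => id
  | n + 1 => f n ∘ iterN f n

/-- Topological transitivity of a non-autonomous system. -/
def NATransitive {X : Type*} [TopologicalSpace X] (f : ℕ → X → X) : Prop :=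
  ∀ U V : Set X, IsOpen U → IsOpen V → U.Nonempty → V.Nonempty →
    ∃ n : ℕ, 0 < n ∧ (iterN f n '' U ∩ V).Nonempty

/-- Weak mixing (order 2). -/
def NAWeaklyMixing {X : Type*} [TopologicalSpace X] (f : ℕ → X → X) : Prop :=
  ∀ U₁ U₂ V₁ V₂ : Set X, IsOpen U₁ → IsOpen U₂ → IsOpen V₁ → IsOpen V₂ →
    U₁.Nonempty → U₂.Nonempty → V₁.Nonempty → V₂.Nonempty →
    ∃ n : ℕ, 0 < n ∧ (iterN f n '' U₁ ∩ V₁).Nonempty ∧ (iterN f n '' U₂ ∩ V₂).Nonempty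

/-- Weak mixing of order `m`. -/
def NAWeaklyMixingOrder {X : Type*} [TopologicalSpace X] (f : ℕ → X → X) (m : ℕ) : Prop :=
  ∀ U V : Fin m → Set X, (∀ i, IsOpen (U i)) → (∀ i, IsOpen (V i)) →
    (∀ i, (U i).Nonempty) → (∀ i, (V i).Nonempty) →
    ∃ n : ℕ, 0 < n ∧ ∀ i, (iterN f n '' U i ∩ V i).Nonempty

/-- Banks's condition. -/
def NABanks {X : Type*} [TopologicalSpace X] (f : ℕ → X → X) : Prop :=
  ∀ U V W : Set X, IsOpen U → IsOpen V → IsOpen W →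
    U.Nonempty → V.Nonempty → W.Nonempty →
    ∃ n : ℕ, 0 < n ∧ (iterN f n '' U ∩ V).Nonempty ∧ (iterN f n '' U ∩ W).Nonempty

/-- Topological mixing. -/
def NAMixing {X : Type*} [TopologicalSpace X] (f : ℕ → X → X) : Prop :=
  ∀ U V : Set X, IsOpen U → IsOpen V → U.Nonempty → V.Nonempty →
    ∃ N : ℕ, ∀ n ≥ N, (iterN f n '' U ∩ V).Nonempty

/-- `blockC f s k = f_{s+k-1} ∘ ⋯ ∘ f_s`. -/
def blockC {X : Type*} (f : ℕ → X → X) (s k : ℕ) : X → X :=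
  iterN (fun i => f (s + i)) k

/-- The `k`-th iterate system `f_{1,∞}^{[k]}`. -/
def kthSys {X : Type*} (f : ℕ → X → X) (k : ℕ) : ℕ → X → X :=
  fun n => blockC f (n * k) k

/-- The induced non-autonomous system on Borel probability measures (pushforwards). -/
noncomputable def inducedM {X : Type*} [MeasurableSpace X] [TopologicalSpace X]
    [BorelSpace X] (f : ℕ → X → X) (hf : ∀ n, Continuous (f n)) :
    ℕ → ProbabilityMeasure X → ProbabilityMeasure X :=
  fun n μ => μ.map ((hf n).measurable.aemeasurable)

/-- The induced non-autonomous system on the hyperspace of non-empty compact subsets. -/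
def inducedK {X : Type*} [TopologicalSpace X] (f : ℕ → X → X) (hf : ∀ n, Continuous (f n)) :
    ℕ → NonemptyCompacts X → NonemptyCompacts X :=
  fun n K => ⟨⟨f n '' (K : Set X), K.isCompact.image (hf n)⟩, K.nonempty.image _⟩

/-- The set `N(U, δ)` of sensitivity times. -/
def NSet {X : Type*} [PseudoMetricSpace X] (f : ℕ → X → X) (U : Set X) (δ : ℝ) : Set ℕ :=
  {n | 0 < n ∧ ∃ x ∈ U, ∃ y ∈ U, δ < dist (iterN f n x) (iterN f n y)}

/-- Sensitive dependence on initial conditions. -/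
def NASensitive {X : Type*} [PseudoMetricSpace X] (f : ℕ → X → X) : Prop :=
  ∃ δ : ℝ, 0 < δ ∧ ∀ x : X, ∀ U : Set X, IsOpen U → x ∈ U →
    ∃ y ∈ U, ∃ n : ℕ, 0 < n ∧ δ < dist (iterN f n x) (iterN f n y)

/-- A thick subset of ℕ. -/
def ThickSet (S : Set ℕ) : Prop := ∀ p : ℕ, ∃ n : ℕ, ∀ j ≤ p, n + j ∈ S

/-- A syndetic subset of ℕ. -/
def SyndeticSet (S : Set ℕ) : Prop := ∃ a : ℕ, ∀ i : ℕ, ∃ j, i ≤ j ∧ j ≤ i + a ∧ j ∈ S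

/-- Upper density of a subset of ℕ. -/
noncomputable def upperDens (S : Set ℕ) : ℝ :=
  Filter.limsup (fun n : ℕ => (Nat.card ↥(S ∩ Set.Iio n) : ℝ) / n) Filter.atTop

/-- Periodic point of a non-autonomous system. -/
def NAPeriodicPt {X : Type*} (f : ℕ → X → X) (x : X) : Prop :=
  ∃ n : ℕ, 0 < n ∧ ∀ k : ℕ, 0 < k → iterN f (n * k) x = x


lemma iterN_continuous {X : Type*} [TopologicalSpace X] (f : ℕ → X → X)
    (hf : ∀ n, Continuous (f n)) (n : ℕ) : Continuous (iterN f n) := by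
  induction n with
  | zero => exact continuous_id
  | succ k ih => exact (hf k).comp ih

lemma iterN_inducedM {X : Type*} [MetricSpace X] [MeasurableSpace X] [BorelSpace X]
    (f : ℕ → X → X) (hf : ∀ n, Continuous (f n)) (n : ℕ) (μ : ProbabilityMeasure X) :
    (iterN (inducedM f hf) n μ).toMeasure
      = (μ : MeasureTheory.Measure X).map (iterN f n) := by
  induction n with
  | zero => simp [iterN, MeasureTheory.Measure.map_id]
  | succ k ih =>
    show (inducedM f hf k (iterN (inducedM f hf) k μ)).toMeasure = _
    rw [inducedM, ProbabilityMeasure.toMeasure_map, ih, iterN,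
      MeasureTheory.Measure.map_map (hf k).measurable
        (iterN_continuous f hf k).measurable]

lemma isOpen_gt_half {X : Type*} [MetricSpace X] [MeasurableSpace X] [BorelSpace X]
    {G : Set X} (hG : IsOpen G) :
    IsOpen {μ : ProbabilityMeasure X | (1:ENNReal)/2 < (μ : MeasureTheory.Measure X) G} := by
  rw [← isClosed_compl_iff, isClosed_iff_clusterPt]
  intro μ hμ
  set S := {μ : ProbabilityMeasure X | (1:ENNReal)/2 < (μ : MeasureTheory.Measure X) G}
  have hne : (𝓝[Sᶜ] μ).NeBot := hμ
  have ht : Tendsto (id : ProbabilityMeasure X → ProbabilityMeasure X) (𝓝[Sᶜ] μ) (𝓝 μ) :=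
    tendsto_id.mono_left nhdsWithin_le_nhds
  have h1 := MeasureTheory.ProbabilityMeasure.le_liminf_measure_open_of_tendsto ht hG
  simp only [mem_compl_iff, mem_setOf_eq, not_lt, S]
  refine h1.trans ?_
  apply Filter.liminf_le_of_frequently_le'
  apply Filter.Eventually.frequently
  refine eventually_nhdsWithin_of_forall (fun ν hν => ?_)
  simpa only [mem_compl_iff, mem_setOf_eq, not_lt, S, id_eq] using hν

/-- transitivity of the induced system on probability measures implies
transitivity of the base non-autonomous system. -/
theorem measure_transitive_implies_transitive {X : Type*} [MetricSpace X] [CompactSpace X]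
    [MeasurableSpace X] [BorelSpace X] (f : ℕ → X → X) (hf : ∀ n, Continuous (f n))
    (h : NATransitive (inducedM f hf)) : NATransitive f := by
  intro U V hU hV ⟨x0, hx0⟩ ⟨y0, hy0⟩
  set MU := {μ : ProbabilityMeasure X | (1:ENNReal)/2 < (μ : MeasureTheory.Measure X) U}
  set MV := {μ : ProbabilityMeasure X | (1:ENNReal)/2 < (μ : MeasureTheory.Measure X) V}
  have hMUne : MU.Nonempty := ⟨⟨MeasureTheory.Measure.dirac x0, inferInstance⟩, by
    simp only [MU, mem_setOf_eq, MeasureTheory.Measure.dirac_apply' _ hU.measurableSet,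
      Set.indicator_of_mem hx0, Pi.one_apply, one_div]
    show (2:ENNReal)⁻¹ < (MeasureTheory.Measure.dirac x0 : MeasureTheory.Measure X) U
    rw [MeasureTheory.Measure.dirac_apply_of_mem hx0]
    simpa using ENNReal.half_lt_self one_ne_zero ENNReal.one_ne_top⟩
  have hMVne : MV.Nonempty := ⟨⟨MeasureTheory.Measure.dirac y0, inferInstance⟩, by
    simp only [MV, mem_setOf_eq, MeasureTheory.Measure.dirac_apply' _ hV.measurableSet,
      Set.indicator_of_mem hy0, Pi.one_apply, one_div]
    show (2:ENNReal)⁻¹ < (MeasureTheory.Measure.dirac y0 : MeasureTheory.Measure X) V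
    rw [MeasureTheory.Measure.dirac_apply_of_mem hy0]
    simpa using ENNReal.half_lt_self one_ne_zero ENNReal.one_ne_top⟩
  obtain ⟨n, hn, ⟨ν, ⟨μ, hμU, rfl⟩, hνV⟩⟩ :=
    h MU MV (isOpen_gt_half hU) (isOpen_gt_half hV) hMUne hMVne
  refine ⟨n, hn, ?_⟩
  have hmap : (iterN (inducedM f hf) n μ).toMeasure V
      = (μ : MeasureTheory.Measure X) ((iterN f n) ⁻¹' V) := by
    rw [iterN_inducedM, MeasureTheory.Measure.map_apply
      (iterN_continuous f hf n).measurable hV.measurableSet]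
  have hμV : (1:ENNReal)/2 < (μ : MeasureTheory.Measure X) ((iterN f n) ⁻¹' V) := by
    rw [← hmap]; exact hνV
  have hsum : (1:ENNReal) < (μ : MeasureTheory.Measure X) U
      + (μ : MeasureTheory.Measure X) ((iterN f n) ⁻¹' V) := by
    calc (1:ENNReal) = 1/2 + 1/2 := (ENNReal.add_halves 1).symm
    _ < _ := ENNReal.add_lt_add hμU hμV
  have hpos : 0 < (μ : MeasureTheory.Measure X) (U ∩ (iterN f n) ⁻¹' V) := by
    by_contra hz
    push_neg at hz
    have hz0 : (μ : MeasureTheory.Measure X) (U ∩ (iterN f n) ⁻¹' V) = 0 := le_antisymm hz zero_le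
    have := MeasureTheory.measure_union_add_inter (μ := (μ : MeasureTheory.Measure X)) U
      ((iterN_continuous f hf n).measurable hV.measurableSet)
    rw [hz0, add_zero] at this
    have hle : (μ : MeasureTheory.Measure X) (U ∪ (iterN f n) ⁻¹' V) ≤ 1 :=
      MeasureTheory.prob_le_one
    rw [this] at hle
    exact absurd (lt_of_lt_of_le hsum hle) (lt_irrefl _)
  obtain ⟨x, hxU, hxV⟩ := MeasureTheory.nonempty_of_measure_ne_zero hpos.ne'
  exact ⟨iterN f n x, ⟨x, hxU, rfl⟩, hxV⟩
end

section
/- Let (X, f_{1,∞}) be an m-periodic commutative non-autonomous system. Then (X, f_{1,∞}) is weakly mixing if and only if the k-th iterate system f_{1,∞}^{[k]} is weakly mixing for every k ≥ 1. -/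
open Set Filter MeasureTheory TopologicalSpace

/-! ### Auxiliary lemmas -/

section Aux

variable {X : Type*} (f : ℕ → X → X)

lemma iterN_add_blockC (a b : ℕ) : iterN f (b + a) = blockC f b a ∘ iterN f b := by
  induction a with
  | zero => rfl
  | succ a ih =>
    show f (b + a) ∘ iterN f (b + a) = blockC f b (a + 1) ∘ iterN f b
    rw [ih]
    rfl

lemma continuous_iterN [TopologicalSpace X] (hf : ∀ n, Continuous (f n)) (n : ℕ) :
    Continuous (iterN f n) := by
  induction n with
  | zero => exact continuous_id
  | succ n ih => exact (hf n).comp ih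

lemma continuous_blockC [TopologicalSpace X] (hf : ∀ n, Continuous (f n)) (s t : ℕ) :
    Continuous (blockC f s t) :=
  continuous_iterN _ (fun _ => hf _) t

lemma comm_map_iterN (g : X → X) (hg : ∀ n, g ∘ f n = f n ∘ g) (n : ℕ) :
    g ∘ iterN f n = iterN f n ∘ g := by
  induction n with
  | zero => rfl
  | succ n ih =>
    show g ∘ (f n ∘ iterN f n) = (f n ∘ iterN f n) ∘ g
    calc g ∘ (f n ∘ iterN f n) = (g ∘ f n) ∘ iterN f n := rfl
      _ = (f n ∘ g) ∘ iterN f n := by rw [hg]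
      _ = f n ∘ (g ∘ iterN f n) := rfl
      _ = f n ∘ (iterN f n ∘ g) := by rw [ih]
      _ = (f n ∘ iterN f n) ∘ g := rfl

lemma comm_f_iterN (hc : ∀ i j, f i ∘ f j = f j ∘ f i) (i n : ℕ) : f i ∘ iterN f n = iterN f n ∘ f i :=
  comm_map_iterN f (f i) (fun j => hc i j) n

lemma comm_iterN_iterN (hc : ∀ i j, f i ∘ f j = f j ∘ f i) (a b : ℕ) : iterN f a ∘ iterN f b = iterN f b ∘ iterN f a :=
  comm_map_iterN f (iterN f a) (fun j => (comm_f_iterN f hc j a).symm) b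

lemma comm_f_blockC (hc : ∀ i j, f i ∘ f j = f j ∘ f i) (i s t : ℕ) : f i ∘ blockC f s t = blockC f s t ∘ f i :=
  comm_map_iterN (fun j => f (s + j)) (f i) (fun j => hc i (s + j)) t

lemma f_add_mul (m : ℕ) (hper : ∀ n, f (n + m) = f n) (n q : ℕ) : f (n + m * q) = f n := by
  induction q with
  | zero => simp
  | succ q ih => rw [Nat.mul_succ, ← Nat.add_assoc, hper, ih]

lemma f_mod (m : ℕ) (hper : ∀ n, f (n + m) = f n) (n : ℕ) : f n = f (n % m) := by
  have h := f_add_mul f m hper (n % m) (n / m)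
  rw [Nat.mod_add_div n m] at h
  exact h

lemma blockC_mod (m : ℕ) (hper : ∀ n, f (n + m) = f n) (a t : ℕ) : blockC f a t = blockC f (a % m) t := by
  unfold blockC
  have h : (fun i => f (a + i)) = (fun i => f (a % m + i)) := by
    funext i
    rw [f_mod f m hper (a + i), f_mod f m hper (a % m + i)]
    congr 1
    conv_lhs => rw [Nat.add_mod]
    conv_rhs => rw [Nat.add_mod, Nat.mod_mod_of_dvd _ (dvd_refl m)]
  rw [h]

lemma iterN_kthSys (k n : ℕ) : iterN (kthSys f k) n = iterN f (n * k) := by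
  induction n with
  | zero => rw [Nat.zero_mul]; rfl
  | succ n ih =>
    show kthSys f k n ∘ iterN (kthSys f k) n = iterN f ((n + 1) * k)
    rw [ih, Nat.succ_mul, iterN_add_blockC f k (n * k)]
    rfl

section Top

variable [MetricSpace X] [CompactSpace X]

/-- If the system is weakly mixing and `X` has two distinct points, `X` is infinite. -/
lemma infinite_of_wm (hwm : NAWeaklyMixing f) {u v : X} (huv : u ≠ v) : Infinite X := by
  by_contra hinf
  rw [not_infinite_iff_finite] at hinf
  have hsing : ∀ w : X, IsOpen ({w} : Set X) := by
    intro w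
    have hcl : IsClosed ({w}ᶜ : Set X) := (Set.toFinite _).isClosed
    simpa using hcl.isOpen_compl
  obtain ⟨n, -, h1, h2⟩ := hwm {u} {u} {u} {v} (hsing u) (hsing u) (hsing u) (hsing v)
    (Set.singleton_nonempty u) (Set.singleton_nonempty u) (Set.singleton_nonempty u)
    (Set.singleton_nonempty v)
  obtain ⟨z₁, ⟨x₁, hx₁, rfl⟩, hz₁⟩ := h1
  obtain ⟨z₂, ⟨x₂, hx₂, rfl⟩, hz₂⟩ := h2
  rw [Set.mem_singleton_iff] at hx₁ hx₂ hz₁ hz₂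
  subst hx₁; subst hx₂
  exact huv (hz₁ ▸ hz₂ ▸ rfl)

/-- In an infinite weakly mixing system, hitting times can be taken arbitrarily large. -/
lemma exists_large_hit (hf : ∀ n, Continuous (f n)) (hwm : NAWeaklyMixing f) [Infinite X]
    (U V : Set X) (hU : IsOpen U) (hV : IsOpen V) (hUne : U.Nonempty) (hVne : V.Nonempty)
    (N : ℕ) : ∃ n : ℕ, N < n ∧ (iterN f n '' U ∩ V).Nonempty := by
  obtain ⟨a, -⟩ := id hUne
  set P : Set X := (fun i => iterN f i a) '' (Set.Iic N) with hP
  have hPfin : P.Finite := (Set.finite_Iic N).image _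
  obtain ⟨b, hb⟩ := hPfin.infinite_compl.nonempty
  have hdist : ∀ i ≤ N, 0 < dist (iterN f i a) b := by
    intro i hi
    rw [dist_pos]
    intro h
    exact hb ⟨i, hi, h⟩
  set F : Finset ℕ := Finset.range (N + 1) with hF
  have hFne : F.Nonempty := ⟨0, by simp [hF]⟩
  set δ : ℝ := F.inf' hFne (fun i => dist (iterN f i a) b) with hδ
  have hδpos : 0 < δ := by
    rw [hδ, Finset.lt_inf'_iff]
    intro i hi
    exact hdist i (by simpa [hF, Nat.lt_succ_iff] using hi)
  set B : Set X := Metric.ball b (δ / 2) with hB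
  set A : Set X := ⋂ i ∈ F, (iterN f i) ⁻¹' (Metric.ball (iterN f i a) (δ / 2)) with hA
  have hAopen : IsOpen A := isOpen_biInter_finset
    (fun i _ => (Metric.isOpen_ball).preimage (continuous_iterN f hf i))
  have hAne : A.Nonempty := ⟨a, by
    simp only [hA, Set.mem_iInter, Set.mem_preimage, Metric.mem_ball]
    intro i _
    simpa using half_pos hδpos⟩
  obtain ⟨n, hn, hh1, hh2⟩ := hwm U A V B hU hAopen hV Metric.isOpen_ball hUne hAne hVne
    ⟨b, by simpa [hB] using half_pos hδpos⟩
  refine ⟨n, ?_, hh1⟩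
  by_contra hle
  push_neg at hle
  obtain ⟨z, ⟨x, hx, rfl⟩, hz⟩ := hh2
  have hx' : dist (iterN f n x) (iterN f n a) < δ / 2 := by
    have := Set.mem_iInter₂.mp hx n (by simp [hF, Nat.lt_succ_iff, hle])
    simpa [Metric.mem_ball, dist_comm] using this
  have hz' : dist (iterN f n x) b < δ / 2 := by simpa [hB, Metric.mem_ball] using hz
  have : dist (iterN f n a) b < δ :=
    calc dist (iterN f n a) b ≤ dist (iterN f n a) (iterN f n x) + dist (iterN f n x) b :=
          dist_triangle _ _ _
      _ < δ / 2 + δ / 2 := by rw [dist_comm (iterN f n a)]; exact add_lt_add hx' hz'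
      _ = δ := by ring
  have hge : δ ≤ dist (iterN f n a) b := by
    rw [hδ]
    exact Finset.inf'_le _ (by simp [hF, Nat.lt_succ_iff, hle])
  linarith

/-- Every map of a weakly mixing commutative system on a compact space is surjective. -/
lemma f_surjective (hc : ∀ i j, f i ∘ f j = f j ∘ f i) (hf : ∀ n, Continuous (f n)) (hwm : NAWeaklyMixing f) (j : ℕ) :
    Function.Surjective (f j) := by
  intro y
  by_contra hy
  push_neg at hy
  have hInf : Infinite X := infinite_of_wm f hwm (fun h : f j y = y => hy y h)
  set R : Set X := Set.range (f j) with hR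
  have hRc : IsClosed R := (isCompact_range (hf j)).isClosed
  have hWne : (Rᶜ : Set X).Nonempty := ⟨y, fun ⟨x, hx⟩ => hy x hx⟩
  obtain ⟨n, hn, hhit⟩ := exists_large_hit f hf hwm Set.univ Rᶜ isOpen_univ hRc.isOpen_compl
    ⟨y, trivial⟩ hWne j
  obtain ⟨z, ⟨x, -, rfl⟩, hz⟩ := hhit
  apply hz
  have e1 : iterN f n = blockC f (j + 1) (n - (j + 1)) ∘ iterN f (j + 1) := by
    conv_lhs => rw [show n = (j + 1) + (n - (j + 1)) by omega]
    exact iterN_add_blockC f (n - (j + 1)) (j + 1)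
  have e2 : iterN f n x = f j ((blockC f (j + 1) (n - (j + 1)) ∘ iterN f j) x) := by
    rw [e1]
    show (blockC f (j + 1) (n - (j + 1)) ∘ (f j ∘ iterN f j)) x = _
    have := congrFun (comm_f_blockC f hc j (j + 1) (n - (j + 1))) (iterN f j x)
    simpa [Function.comp] using this.symm
  exact ⟨_, e2.symm⟩

lemma blockC_surjective (hc : ∀ i j, f i ∘ f j = f j ∘ f i) (hf : ∀ n, Continuous (f n)) (hwm : NAWeaklyMixing f) (s t : ℕ) :
    Function.Surjective (blockC f s t) := by
  induction t with
  | zero => exact fun x => ⟨x, rfl⟩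
  | succ t ih =>
    have : blockC f s (t + 1) = f (s + t) ∘ blockC f s t := rfl
    rw [this]
    exact (f_surjective f hc hf hwm (s + t)).comp ih

/-- Furstenberg intersection lemma for commutative non-autonomous systems. -/
lemma furstenberg (hc : ∀ i j, f i ∘ f j = f j ∘ f i) (hf : ∀ n, Continuous (f n)) (hwm : NAWeaklyMixing f)
    {U₁ V₁ U₂ V₂ : Set X} (h₁ : IsOpen U₁) (h₂ : IsOpen V₁) (h₃ : IsOpen U₂)
    (h₄ : IsOpen V₂) (n₁ : U₁.Nonempty) (n₂ : V₁.Nonempty) (n₃ : U₂.Nonempty)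
    (n₄ : V₂.Nonempty) :
    ∃ U V : Set X, IsOpen U ∧ IsOpen V ∧ U.Nonempty ∧ V.Nonempty ∧
      ∀ j : ℕ, (iterN f j '' U ∩ V).Nonempty →
        (iterN f j '' U₁ ∩ V₁).Nonempty ∧ (iterN f j '' U₂ ∩ V₂).Nonempty := by
  obtain ⟨n₀, -, hA, hB⟩ := hwm U₁ V₁ U₂ V₂ h₁ h₂ h₃ h₄ n₁ n₂ n₃ n₄
  refine ⟨U₁ ∩ iterN f n₀ ⁻¹' U₂, V₁ ∩ iterN f n₀ ⁻¹' V₂,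
    h₁.inter (h₃.preimage (continuous_iterN f hf n₀)),
    h₂.inter (h₄.preimage (continuous_iterN f hf n₀)), ?_, ?_, ?_⟩
  · obtain ⟨z, ⟨x, hx, rfl⟩, hz⟩ := hA
    exact ⟨x, hx, hz⟩
  · obtain ⟨z, ⟨x, hx, rfl⟩, hz⟩ := hB
    exact ⟨x, hx, hz⟩
  · rintro j ⟨z, ⟨x, hx, rfl⟩, hz⟩
    refine ⟨⟨iterN f j x, ⟨x, hx.1, rfl⟩, hz.1⟩, ?_⟩
    refine ⟨iterN f j (iterN f n₀ x), ⟨iterN f n₀ x, hx.2, rfl⟩, ?_⟩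
    have := congrFun (comm_iterN_iterN f hc j n₀) x
    simp only [Function.comp_apply] at this
    rw [this]
    exact hz.2

/-- Iterated Furstenberg lemma over a list of pairs. -/
lemma furstenberg_list (hc : ∀ i j, f i ∘ f j = f j ∘ f i) (hf : ∀ n, Continuous (f n)) (hwm : NAWeaklyMixing f)
    (hX : Nonempty X) (L : List (Set X × Set X))
    (hL : ∀ p ∈ L, IsOpen p.1 ∧ IsOpen p.2 ∧ p.1.Nonempty ∧ p.2.Nonempty) :
    ∃ U V : Set X, IsOpen U ∧ IsOpen V ∧ U.Nonempty ∧ V.Nonempty ∧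
      ∀ j : ℕ, (iterN f j '' U ∩ V).Nonempty →
        ∀ p ∈ L, (iterN f j '' p.1 ∩ p.2).Nonempty := by
  induction L with
  | nil =>
    exact ⟨Set.univ, Set.univ, isOpen_univ, isOpen_univ, Set.univ_nonempty,
      Set.univ_nonempty, by simp⟩
  | cons p L ih =>
    obtain ⟨U', V', hU'o, hV'o, hU'ne, hV'ne, hUV'⟩ :=
      ih (fun q hq => hL q (List.mem_cons_of_mem p hq))
    obtain ⟨hp1, hp2, hp3, hp4⟩ := hL p List.mem_cons_self
    obtain ⟨U, V, hUo, hVo, hUne, hVne, hUV⟩ :=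
      furstenberg f hc hf hwm hp1 hp2 hU'o hV'o hp3 hp4 hU'ne hV'ne
    refine ⟨U, V, hUo, hVo, hUne, hVne, ?_⟩
    intro j hj q hq
    rcases List.mem_cons.mp hq with rfl | hq'
    · exact (hUV j hj).1
    · exact hUV' j (hUV j hj).2 q hq'

end Top

end Aux

/-- an `m`-periodic commutative non-autonomous system is weakly mixing iff
every `k`-th iterate system (`k ≥ 1`) is weakly mixing. -/
theorem periodic_commutative_weaklyMixing_iff_kth {X : Type*} [MetricSpace X] [CompactSpace X]
    (f : ℕ → X → X) (hf : ∀ n, Continuous (f n)) (m : ℕ) (hm : 0 < m)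
    (hper : ∀ n, f (n + m) = f n) (hc : ∀ i j, f i ∘ f j = f j ∘ f i) :
    NAWeaklyMixing f ↔ ∀ k : ℕ, 1 ≤ k → NAWeaklyMixing (kthSys f k) := by
  constructor
  · intro hwm k hk
    intro U₁ U₂ V₁ V₂ hO₁ hO₂ hO₃ hO₄ hN₁ hN₂ hN₃ hN₄
    have hX : Nonempty X := ⟨hN₁.some⟩
    -- Step 1: combine the two pairs into one.
    obtain ⟨U, V, hUo, hVo, hUne, hVne, hUV⟩ :=
      furstenberg_list f hc hf hwm hX [(U₁, V₁), (U₂, V₂)] (by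
        rintro p hp
        rcases List.mem_cons.mp hp with rfl | hp'
        · exact ⟨hO₁, hO₃, hN₁, hN₃⟩
        · rcases List.mem_cons.mp hp' with rfl | h
          · exact ⟨hO₂, hO₄, hN₂, hN₄⟩
          · exact absurd h List.not_mem_nil)
    set K := m * k with hK
    have hKpos : 0 < K := Nat.mul_pos hm hk
    -- Step 2: combine the pairs `(U, (blockC f s (K - s))⁻¹' V)` for `s < K`.
    set L : List (Set X × Set X) :=
      (List.range K).map (fun s => (U, (blockC f s (K - s)) ⁻¹' V)) with hL
    obtain ⟨Us, Vs, hUso, hVso, hUsne, hVsne, hstar⟩ :=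
      furstenberg_list f hc hf hwm hX L (by
        rintro p hp
        rw [hL, List.mem_map] at hp
        obtain ⟨s, -, rfl⟩ := hp
        refine ⟨hUo, hVo.preimage (continuous_blockC f hf s (K - s)), hUne, ?_⟩
        obtain ⟨v, hv⟩ := hVne
        obtain ⟨w, hw⟩ := blockC_surjective f hc hf hwm s (K - s) v
        exact ⟨w, by simp [Set.mem_preimage, hw, hv]⟩)
    -- Step 3: one positive hitting time for `(Us, Vs)`.
    obtain ⟨n₀, hn₀, hhit, -⟩ := hwm Us Us Vs Vs hUso hUso hVso hVso hUsne hUsne hVsne hVsne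
    have hall := hstar n₀ hhit
    set s := n₀ % K with hs
    have hsK : s < K := Nat.mod_lt _ hKpos
    have hmemL : (U, (blockC f s (K - s)) ⁻¹' V) ∈ L := by
      rw [hL, List.mem_map]
      exact ⟨s, List.mem_range.mpr hsK, rfl⟩
    obtain ⟨z, ⟨x, hxU, rfl⟩, hzW⟩ := hall _ hmemL
    rw [Set.mem_preimage] at hzW
    -- Step 4: complete `n₀` to the next multiple of `K`.
    have hmod : n₀ % m = s % m := by
      rw [hs, Nat.mod_mod_of_dvd _ ⟨k, hK⟩]
    have key1 : iterN f (n₀ + (K - s)) x ∈ V := by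
      rw [iterN_add_blockC f (K - s) n₀]
      show blockC f n₀ (K - s) (iterN f n₀ x) ∈ V
      rw [blockC_mod f m hper n₀ (K - s), hmod, ← blockC_mod f m hper s (K - s)]
      exact hzW
    set q := n₀ / K with hq
    have harith : n₀ + (K - s) = (m * (q + 1)) * k := by
      have hdm : K * q + s = n₀ := by rw [hs, hq]; exact Nat.div_add_mod n₀ K
      have h2 : (m * (q + 1)) * k = K * q + K := by rw [hK]; ring
      omega
    refine ⟨m * (q + 1), Nat.mul_pos hm (Nat.succ_pos q), ?_, ?_⟩
    · have hhitUV : (iterN f ((m * (q + 1)) * k) '' U ∩ V).Nonempty :=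
        ⟨_, ⟨x, hxU, rfl⟩, by rw [← harith]; exact key1⟩
      have := hUV _ hhitUV (U₁, V₁) (by simp)
      rwa [iterN_kthSys]
    · have hhitUV : (iterN f ((m * (q + 1)) * k) '' U ∩ V).Nonempty :=
        ⟨_, ⟨x, hxU, rfl⟩, by rw [← harith]; exact key1⟩
      have := hUV _ hhitUV (U₂, V₂) (by simp)
      rwa [iterN_kthSys]
  · intro h
    have h1 := h 1 le_rfl
    intro U₁ U₂ V₁ V₂ hO₁ hO₂ hO₃ hO₄ hN₁ hN₂ hN₃ hN₄
    obtain ⟨n, hn, ha, hb⟩ := h1 U₁ U₂ V₁ V₂ hO₁ hO₂ hO₃ hO₄ hN₁ hN₂ hN₃ hN₄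
    rw [iterN_kthSys, Nat.mul_one] at ha hb
    exact ⟨n, hn, ha, hb⟩
end
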